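/- Suppose ŝ ∈ ℝ^P and v̂ ∈ ℝ^{PN} satisfy F(ŝ, v̂) = 0 and Δ(ŝ) is invertible. Then there exist a neighborhood U of 0 in ℝ^{PN}, a neighborhood V of 0 in ℝ^P, and a continuously differentiable map t̂ : U → V with t̂(0) = 0 such that, for every ŵ ∈ U, t̂(ŵ) is the unique element t of V with F(ŝ + t, v̂ + ŵ) = 0; moreover the derivative of t̂ at 0 is the linear map ŵ ↦ Δ(ŝ)⁻¹ F^v(v̂, ŵ). -/

import Mathlib

open Matrix

section Aux

variable {E F G : Type*}
  [NormedAddCommGroup E] [NormedSpace ℝ E]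
  [NormedAddCommGroup F] [NormedSpace ℝ F]
  [NormedAddCommGroup G] [NormedSpace ℝ G]

/-- Upgrade a bilinear map between finite dimensional spaces to a continuous bilinear map. -/
noncomputable def toCLM2 [FiniteDimensional ℝ E] [FiniteDimensional ℝ F]
    (L : E →ₗ[ℝ] F →ₗ[ℝ] G) : E →L[ℝ] F →L[ℝ] G :=
  LinearMap.toContinuousLinearMap
    { toFun := fun s => LinearMap.toContinuousLinearMap (L s)
      map_add' := fun x y => by ext z; simp
      map_smul' := fun r x => by ext z; simp }

@[simp] lemma toCLM2_apply [FiniteDimensional ℝ E] [FiniteDimensional ℝ F]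
    (L : E →ₗ[ℝ] F →ₗ[ℝ] G) (x : E) (y : F) : toCLM2 L x y = L x y := rfl

/-- The continuous bilinear map `(s, t) ↦ (α ↦ ∑ β γ, c α β γ * s β * t γ)`. -/
noncomputable def Bmap {ι : Type*} [Fintype ι] (c : ι → ι → ι → ℝ) :
    (ι → ℝ) →L[ℝ] (ι → ℝ) →L[ℝ] (ι → ℝ) :=
  toCLM2 <| LinearMap.mk₂ ℝ (fun s t α => ∑ β, ∑ γ, c α β γ * s β * t γ)
    (fun s s' t => funext fun α => by
      simp [add_mul, mul_add, Finset.sum_add_distrib])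
    (fun r s t => funext fun α => by
      simp only [Pi.smul_apply, smul_eq_mul, Finset.mul_sum]
      exact Finset.sum_congr rfl fun β _ => Finset.sum_congr rfl fun γ _ => by ring)
    (fun s t t' => funext fun α => by
      simp [mul_add, Finset.sum_add_distrib])
    (fun r s t => funext fun α => by
      simp only [Pi.smul_apply, smul_eq_mul, Finset.mul_sum]
      exact Finset.sum_congr rfl fun β _ => Finset.sum_congr rfl fun γ _ => by ring)

@[simp] lemma Bmap_apply {ι : Type*} [Fintype ι] (c : ι → ι → ι → ℝ) (s t : ι → ℝ) (α : ι) :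
    Bmap c s t α = ∑ β, ∑ γ, c α β γ * s β * t γ := rfl

/-- The continuous bilinear map `(v, w) ↦ (α ↦ ∑ β γ, c α β γ * ⟪v β, M (w γ)⟫)`. -/
noncomputable def Wmap {ι : Type*} [Fintype ι] {N : ℕ} (c : ι → ι → ι → ℝ)
    (M : Matrix (Fin N) (Fin N) ℝ) :
    (ι → Fin N → ℝ) →L[ℝ] (ι → Fin N → ℝ) →L[ℝ] (ι → ℝ) :=
  toCLM2 <| LinearMap.mk₂ ℝ (fun v w α => ∑ β, ∑ γ, c α β γ * (v β ⬝ᵥ M *ᵥ w γ))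
    (fun v v' w => funext fun α => by
      simp [add_dotProduct, mul_add, Finset.sum_add_distrib])
    (fun r v w => funext fun α => by
      simp only [Pi.smul_apply, smul_dotProduct, smul_eq_mul, Finset.mul_sum]
      exact Finset.sum_congr rfl fun β _ => Finset.sum_congr rfl fun γ _ => by ring)
    (fun v w w' => funext fun α => by
      simp [Matrix.mulVec_add, dotProduct_add, mul_add, Finset.sum_add_distrib])
    (fun r v w => funext fun α => by
      simp only [Pi.smul_apply, Matrix.mulVec_smul, dotProduct_smul, smul_eq_mul, Finset.mul_sum]
      exact Finset.sum_congr rfl fun β _ => Finset.sum_congr rfl fun γ _ => by ring)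

@[simp] lemma Wmap_apply {ι : Type*} [Fintype ι] {N : ℕ} (c : ι → ι → ι → ℝ)
    (M : Matrix (Fin N) (Fin N) ℝ) (v w : ι → Fin N → ℝ) (α : ι) :
    Wmap c M v w α = ∑ β, ∑ γ, c α β γ * (v β ⬝ᵥ M *ᵥ w γ) := rfl

end Aux


set_option maxHeartbeats 1000000 in
/-- Implicit function step in the proof of Theorem 5.8 of Hakula–Laaksonen: near a zero
`(ŝ, v̂)` of `F` with `Δ(ŝ)` invertible there is a unique local C¹ implicit function
`t̂(ŵ)` with `F(ŝ + t̂(ŵ), v̂ + ŵ) = 0`, whose derivative at `0` is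
`ŵ ↦ Δ(ŝ)⁻¹ F^v(v̂, ŵ)`. -/
theorem stmt12
    {ι : Type*} [Fintype ι] [DecidableEq ι]
    (c : ι → ι → ι → ℝ)
    (hc1 : ∀ α β γ, c α β γ = c β α γ)
    (hc2 : ∀ α β γ, c α β γ = c α γ β)
    (N : ℕ)
    (M : Matrix (Fin N) (Fin N) ℝ)
    (hMsymm : Mᵀ = M)
    (hMpos : ∀ z : Fin N → ℝ, z ≠ 0 → 0 < z ⬝ᵥ (M *ᵥ z))
    (F : (ι → ℝ) → (ι → Fin N → ℝ) → ι → ℝ)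
    (hF : F = fun sh vh α => (∑ β, ∑ γ, c α β γ * sh β * sh γ) -
        ∑ β, ∑ γ, c α β γ * (vh β ⬝ᵥ (M *ᵥ vh γ)))
    (Fv : (ι → Fin N → ℝ) → (ι → Fin N → ℝ) → ι → ℝ)
    (hFv : Fv = fun vh wh α => ∑ β, ∑ γ, c α β γ * (vh β ⬝ᵥ (M *ᵥ wh γ)))
    (Δ : (ι → ℝ) → Matrix ι ι ℝ)
    (hΔ : Δ = fun sh => Matrix.of fun α β => ∑ γ, c γ α β * sh γ)
    (sh : ι → ℝ) (vh : ι → Fin N → ℝ)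
    (hsol : F sh vh = 0)
    (hinv : IsUnit (Δ sh)) :
    ∃ U ∈ nhds (0 : ι → Fin N → ℝ), ∃ V ∈ nhds (0 : ι → ℝ),
      ∃ t : (ι → Fin N → ℝ) → ι → ℝ,
        t 0 = 0 ∧ ContDiffOn ℝ 1 t U ∧
        (∀ w ∈ U, t w ∈ V ∧ F (sh + t w) (vh + w) = 0 ∧
          ∀ t' ∈ V, F (sh + t') (vh + w) = 0 → t' = t w) ∧
        (∀ w : ι → Fin N → ℝ, fderiv ℝ t 0 w = (Δ sh)⁻¹ *ᵥ Fv vh w) := by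
  classical
  -- matrix inverse facts
  have hdet := (Matrix.isUnit_iff_isUnit_det _).1 hinv
  have hMul : Δ sh * (Δ sh)⁻¹ = 1 := Matrix.mul_nonsing_inv _ hdet
  have hMul' : (Δ sh)⁻¹ * Δ sh = 1 := Matrix.nonsing_inv_mul _ hdet
  -- dot product symmetry
  have hdot : ∀ x y : Fin N → ℝ, x ⬝ᵥ M *ᵥ y = y ⬝ᵥ M *ᵥ x := by
    intro x y
    rw [Matrix.dotProduct_mulVec, ← Matrix.mulVec_transpose, hMsymm, dotProduct_comm]
  -- symmetry of the bilinear maps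
  have hBsymm : ∀ s t : (ι → ℝ), Bmap c s t = Bmap c t s := by
    intro s t
    funext α
    simp only [Bmap_apply]
    rw [Finset.sum_comm]
    exact Finset.sum_congr rfl fun β _ => Finset.sum_congr rfl fun γ _ => by
      rw [hc2]; ring
  have hWsymm : ∀ v w : (ι → Fin N → ℝ), Wmap c M v w = Wmap c M w v := by
    intro v w
    funext α
    simp only [Wmap_apply]
    rw [Finset.sum_comm]
    exact Finset.sum_congr rfl fun β _ => Finset.sum_congr rfl fun γ _ => by
      rw [hc2, hdot]
  -- relation between Bmap at sh and Δ
  have hBΔ : ∀ u : (ι → ℝ), Bmap c sh u = Δ sh *ᵥ u := by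
    intro u
    funext α
    simp only [Bmap_apply, Matrix.mulVec, dotProduct, hΔ, Matrix.of_apply]
    rw [Finset.sum_comm]
    exact Finset.sum_congr rfl fun γ _ => by
      rw [Finset.sum_mul]
      exact Finset.sum_congr rfl fun β _ => by rw [hc1]
  have hWFv : ∀ u : (ι → Fin N → ℝ), Wmap c M vh u = Fv vh u := by
    intro u; funext α; simp [hFv]
  -- the implicit equation
  set g : (ι → ℝ) × (ι → Fin N → ℝ) → (ι → ℝ) := fun p => Bmap c (sh + p.1) (sh + p.1) - Wmap c M (vh + p.2) (vh + p.2)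
    with hg
  have hgF : ∀ p : (ι → ℝ) × (ι → Fin N → ℝ), g p = F (sh + p.1) (vh + p.2) := by
    intro p; funext α; simp only [hg, hF, Pi.sub_apply, Bmap_apply, Wmap_apply]
  set Φ : (ι → ℝ) × (ι → Fin N → ℝ) → (ι → ℝ) × (ι → Fin N → ℝ) := fun p => (g p, p.2) with hΦdef
  have hΦ0 : Φ 0 = 0 := by
    have h1 : g 0 = 0 := by
      have := hgF 0
      simpa [hsol] using this
    simp [hΦdef, h1]
  -- smoothness
  have haff1 : ContDiff ℝ 1 (fun p : (ι → ℝ) × (ι → Fin N → ℝ) => sh + p.1) := contDiff_const.add contDiff_fst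
  have haff2 : ContDiff ℝ 1 (fun p : (ι → ℝ) × (ι → Fin N → ℝ) => vh + p.2) := contDiff_const.add contDiff_snd
  have hgc : ContDiff ℝ 1 g := by
    have h1 : ContDiff ℝ 1 (fun p : (ι → ℝ) × (ι → Fin N → ℝ) =>
        Bmap c (sh + p.1) (sh + p.1)) :=
      (((Bmap c).contDiff).comp haff1).clm_apply haff1
    have h2 : ContDiff ℝ 1 (fun p : (ι → ℝ) × (ι → Fin N → ℝ) =>
        Wmap c M (vh + p.2) (vh + p.2)) :=
      (((Wmap c M).contDiff).comp haff2).clm_apply haff2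
    exact h1.sub h2
  have hΦc : ContDiff ℝ 1 Φ := hgc.prodMk contDiff_snd
  -- strict derivative of g
  have ha1 : HasStrictFDerivAt (fun p : (ι → ℝ) × (ι → Fin N → ℝ) => sh + p.1)
      (ContinuousLinearMap.fst ℝ (ι → ℝ) (ι → Fin N → ℝ)) 0 :=
    HasStrictFDerivAt.const_add sh
      ((ContinuousLinearMap.fst ℝ (ι → ℝ) (ι → Fin N → ℝ)).hasStrictFDerivAt)
  have ha2 : HasStrictFDerivAt (fun p : (ι → ℝ) × (ι → Fin N → ℝ) => vh + p.2)
      (ContinuousLinearMap.snd ℝ (ι → ℝ) (ι → Fin N → ℝ)) 0 :=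
    HasStrictFDerivAt.const_add vh
      ((ContinuousLinearMap.snd ℝ (ι → ℝ) (ι → Fin N → ℝ)).hasStrictFDerivAt)
  have hc1s : HasStrictFDerivAt (fun p : (ι → ℝ) × (ι → Fin N → ℝ) => Bmap c (sh + p.1))
      ((Bmap c).comp (ContinuousLinearMap.fst ℝ (ι → ℝ) (ι → Fin N → ℝ))) 0 :=
    ((Bmap c).hasStrictFDerivAt).comp 0 ha1
  have hc2s : HasStrictFDerivAt (fun p : (ι → ℝ) × (ι → Fin N → ℝ) => Wmap c M (vh + p.2))
      ((Wmap c M).comp (ContinuousLinearMap.snd ℝ (ι → ℝ) (ι → Fin N → ℝ))) 0 :=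
    ((Wmap c M).hasStrictFDerivAt).comp 0 ha2
  obtain ⟨D1, hg1, hD1⟩ : ∃ D1 : ((ι → ℝ) × (ι → Fin N → ℝ)) →L[ℝ] (ι → ℝ),
      HasStrictFDerivAt (fun p : (ι → ℝ) × (ι → Fin N → ℝ) =>
        Bmap c (sh + p.1) (sh + p.1)) D1 0 ∧
      ∀ p : (ι → ℝ) × (ι → Fin N → ℝ), D1 p = (2 : ℝ) • (Δ sh *ᵥ p.1) := by
    refine ⟨_, hc1s.clm_apply ha1, ?_⟩
    intro p
    simp only [ContinuousLinearMap.add_apply, ContinuousLinearMap.coe_comp',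
      Function.comp_apply, ContinuousLinearMap.coe_fst', ContinuousLinearMap.flip_apply,
      Prod.fst_zero, add_zero]
    rw [hBsymm p.1 sh, ← two_smul ℝ (Bmap c sh p.1), hBΔ]
  obtain ⟨D2, hg2, hD2⟩ : ∃ D2 : ((ι → ℝ) × (ι → Fin N → ℝ)) →L[ℝ] (ι → ℝ),
      HasStrictFDerivAt (fun p : (ι → ℝ) × (ι → Fin N → ℝ) =>
        Wmap c M (vh + p.2) (vh + p.2)) D2 0 ∧
      ∀ p : (ι → ℝ) × (ι → Fin N → ℝ), D2 p = (2 : ℝ) • Wmap c M vh p.2 := by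
    refine ⟨_, hc2s.clm_apply ha2, ?_⟩
    intro p
    simp only [ContinuousLinearMap.add_apply, ContinuousLinearMap.coe_comp',
      Function.comp_apply, ContinuousLinearMap.coe_snd', ContinuousLinearMap.flip_apply,
      Prod.snd_zero, add_zero]
    rw [hWsymm p.2 vh, ← two_smul ℝ (Wmap c M vh p.2)]
  have hgs : HasStrictFDerivAt g (D1 - D2) 0 := hg1.sub hg2
  -- the derivative of Φ as a continuous linear equiv
  set Z : ((ι → ℝ) × (ι → Fin N → ℝ)) →L[ℝ] (ι → ℝ) × (ι → Fin N → ℝ) := (D1 - D2).prod (ContinuousLinearMap.snd ℝ (ι → ℝ) (ι → Fin N → ℝ)) with hZdef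
  set Zinv : ((ι → ℝ) × (ι → Fin N → ℝ)) →L[ℝ] (ι → ℝ) × (ι → Fin N → ℝ) :=
    ((LinearMap.toContinuousLinearMap (Matrix.mulVecLin ((Δ sh)⁻¹))).comp
      (((2 : ℝ)⁻¹ • ContinuousLinearMap.fst ℝ (ι → ℝ) (ι → Fin N → ℝ)) +
        (Wmap c M vh).comp (ContinuousLinearMap.snd ℝ (ι → ℝ) (ι → Fin N → ℝ)))).prod
      (ContinuousLinearMap.snd ℝ (ι → ℝ) (ι → Fin N → ℝ)) with hZinvdef
  have hZapp : ∀ p : (ι → ℝ) × (ι → Fin N → ℝ), Z p = ((2 : ℝ) • (Δ sh *ᵥ p.1) - (2 : ℝ) • Wmap c M vh p.2, p.2) := by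
    intro p
    simp [hZdef, hD1, hD2]
  have hZinvapp : ∀ p : (ι → ℝ) × (ι → Fin N → ℝ),
      Zinv p = ((Δ sh)⁻¹ *ᵥ ((2 : ℝ)⁻¹ • p.1 + Wmap c M vh p.2), p.2) := by
    intro p
    simp [hZinvdef, Matrix.mulVec_add, Matrix.mulVec_smul]
  have hleft : Function.LeftInverse Zinv Z := by
    intro p
    rw [hZapp, hZinvapp]
    ext1
    · show (Δ sh)⁻¹ *ᵥ ((2 : ℝ)⁻¹ • ((2 : ℝ) • (Δ sh *ᵥ p.1) - (2 : ℝ) • Wmap c M vh p.2)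
        + Wmap c M vh p.2) = p.1
      have h1 : (2 : ℝ)⁻¹ • ((2 : ℝ) • (Δ sh *ᵥ p.1) - (2 : ℝ) • Wmap c M vh p.2)
          + Wmap c M vh p.2 = Δ sh *ᵥ p.1 := by
        rw [smul_sub, smul_smul, smul_smul]
        norm_num
      rw [h1, Matrix.mulVec_mulVec, hMul', Matrix.one_mulVec]
    · rfl
  have hright : Function.RightInverse Zinv Z := by
    intro p
    rw [hZinvapp, hZapp]
    ext1
    · show (2 : ℝ) • (Δ sh *ᵥ ((Δ sh)⁻¹ *ᵥ ((2 : ℝ)⁻¹ • p.1 + Wmap c M vh p.2)))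
        - (2 : ℝ) • Wmap c M vh p.2 = p.1
      rw [Matrix.mulVec_mulVec, hMul, Matrix.one_mulVec, smul_add, smul_smul]
      norm_num
    · rfl
  set A : ((ι → ℝ) × (ι → Fin N → ℝ)) ≃L[ℝ] (ι → ℝ) × (ι → Fin N → ℝ) := ContinuousLinearEquiv.equivOfInverse Z Zinv hleft hright
    with hAdef
  have hΦs : HasStrictFDerivAt Φ (A : ((ι → ℝ) × (ι → Fin N → ℝ)) →L[ℝ] (ι → ℝ) × (ι → Fin N → ℝ)) 0 := by
    have h : HasStrictFDerivAt Φ Z 0 :=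
      hgs.prodMk (ContinuousLinearMap.snd ℝ (ι → ℝ) (ι → Fin N → ℝ)).hasStrictFDerivAt
    exact h
  -- the inverse function theorem
  set e := hΦs.toOpenPartialHomeomorph Φ with hedef
  have hsrc : (0 : (ι → ℝ) × (ι → Fin N → ℝ)) ∈ e.source := hΦs.mem_toOpenPartialHomeomorph_source
  have htgt : (0 : (ι → ℝ) × (ι → Fin N → ℝ)) ∈ e.target := by
    have := hΦs.image_mem_toOpenPartialHomeomorph_target
    rwa [hΦ0] at this
  have hecoe : (e : (ι → ℝ) × (ι → Fin N → ℝ) → (ι → ℝ) × (ι → Fin N → ℝ)) = Φ := rfl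
  -- C¹ smoothness of the local inverse near 0
  have hinvCD : ContDiffAt ℝ 1 e.symm 0 := by
    have h := (hΦc.contDiffAt (x := 0)).to_localInverse (f' := A) hΦs.hasFDerivAt one_ne_zero
    rw [hΦ0] at h
    exact h
  obtain ⟨ucd, hucd, hucdCD⟩ : ∃ u ∈ nhds (0 : (ι → ℝ) × (ι → Fin N → ℝ)), ContDiffOn ℝ 1 e.symm u :=
    hinvCD.contDiffOn le_rfl (by simp)
  -- strict derivative of the local inverse
  have hinvS : HasStrictFDerivAt e.symm (A.symm : ((ι → ℝ) × (ι → Fin N → ℝ)) →L[ℝ] (ι → ℝ) × (ι → Fin N → ℝ)) 0 := by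
    have h := hΦs.to_localInverse
    rwa [hΦ0] at h
  -- construct the neighborhoods
  obtain ⟨V₁, hV₁, U₁, hU₁, hVU⟩ :
      ∃ V₁ ∈ nhds (0 : (ι → ℝ)), ∃ U₁ ∈ nhds (0 : (ι → Fin N → ℝ)), V₁ ×ˢ U₁ ⊆ e.source := by
    have : e.source ∈ nhds ((0 : (ι → ℝ)), (0 : (ι → Fin N → ℝ))) := e.open_source.mem_nhds hsrc
    exact mem_nhds_prod_iff.1 this
  have hembc : Continuous (fun w : (ι → Fin N → ℝ) => ((0 : (ι → ℝ)), w)) := continuous_const.prodMk continuous_id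
  have hsymm00 : e.symm (0, 0) = 0 := by
    have h := e.left_inv hsrc
    rwa [hecoe, hΦ0] at h
  have hcont : ContinuousAt (fun w : (ι → Fin N → ℝ) => e.symm (0, w)) 0 := by
    have h1 : ContinuousAt e.symm ((0 : (ι → ℝ)), (0 : (ι → Fin N → ℝ))) := by
      have := e.continuousAt_symm (x := ((0 : (ι → ℝ)), (0 : (ι → Fin N → ℝ)))) htgt
      exact this
    exact h1.comp hembc.continuousAt
  set U : Set (ι → Fin N → ℝ) := U₁ ∩ ((fun w : (ι → Fin N → ℝ) => ((0 : (ι → ℝ)), w)) ⁻¹' e.target)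
      ∩ ((fun w : (ι → Fin N → ℝ) => e.symm (0, w)) ⁻¹' (V₁ ×ˢ U₁))
      ∩ ((fun w : (ι → Fin N → ℝ) => ((0 : (ι → ℝ)), w)) ⁻¹' ucd) with hUdef
  have hUnhds : U ∈ nhds (0 : (ι → Fin N → ℝ)) := by
    have h1 : ((fun w : (ι → Fin N → ℝ) => ((0 : (ι → ℝ)), w)) ⁻¹' e.target) ∈ nhds (0 : (ι → Fin N → ℝ)) := by
      apply hembc.continuousAt.preimage_mem_nhds
      exact e.open_target.mem_nhds htgt
    have h2 : ((fun w : (ι → Fin N → ℝ) => e.symm (0, w)) ⁻¹' (V₁ ×ˢ U₁)) ∈ nhds (0 : (ι → Fin N → ℝ)) := by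
      apply hcont.preimage_mem_nhds
      rw [hsymm00]
      exact prod_mem_nhds hV₁ hU₁
    have h3 : ((fun w : (ι → Fin N → ℝ) => ((0 : (ι → ℝ)), w)) ⁻¹' ucd) ∈ nhds (0 : (ι → Fin N → ℝ)) :=
      hembc.continuousAt.preimage_mem_nhds hucd
    exact Filter.inter_mem (Filter.inter_mem (Filter.inter_mem hU₁ h1) h2) h3
  set t : (ι → Fin N → ℝ) → (ι → ℝ) := fun w => (e.symm (0, w)).1 with htdef
  refine ⟨U, hUnhds, V₁, hV₁, t, ?_, ?_, ?_, ?_⟩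
  · -- t 0 = 0
    show (e.symm (0, 0)).1 = 0
    rw [hsymm00]
    rfl
  · -- ContDiffOn
    have h1 : ContDiffOn ℝ 1 (fun w : (ι → Fin N → ℝ) => e.symm (0, w)) U := by
      apply hucdCD.comp ((contDiff_const.prodMk contDiff_id).contDiffOn)
      intro w hw
      exact hw.2
    exact (contDiff_fst.comp_contDiffOn h1 : ContDiffOn ℝ 1 (fun w : (ι → Fin N → ℝ) => (e.symm (0, w)).1) U)
  · -- main properties
    intro w hw
    obtain ⟨⟨⟨hwU₁, hwtgt⟩, hwV⟩, hwcd⟩ := hw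
    have hRI : e ((e.symm (0, w))) = (0, w) := e.right_inv hwtgt
    have hΦeq : Φ (e.symm (0, w)) = ((0 : (ι → ℝ)), w) := by rw [← hecoe]; exact hRI
    have hsnd : (e.symm (0, w)).2 = w := congrArg Prod.snd hΦeq
    have hfst0 : g (e.symm (0, w)) = 0 := congrArg Prod.fst hΦeq
    have hmemV : e.symm (0, w) ∈ V₁ ×ˢ U₁ := hwV
    refine ⟨hmemV.1, ?_, ?_⟩
    · -- F (sh + t w) (vh + w) = 0
      have := hgF (e.symm (0, w))
      rw [hfst0] at this
      rw [hsnd] at this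
      exact this.symm
    · -- uniqueness
      intro t' ht' hFt'
      have hmem' : (t', w) ∈ e.source := hVU ⟨ht', hwU₁⟩
      have hΦt' : Φ (t', w) = ((0 : (ι → ℝ)), w) := by
        have hgt' : g (t', w) = 0 := by rw [hgF]; exact hFt'
        simp [hΦdef, hgt']
      have hmem'' : e.symm (0, w) ∈ e.source := hVU hmemV
      have : (t', w) = e.symm (0, w) := by
        apply e.injOn hmem' hmem''
        rw [hecoe, hΦt', hΦeq]
      have := congrArg Prod.fst this
      exact this
  · -- derivative at 0
    intro w
    have h0 : HasFDerivAt (fun w : (ι → Fin N → ℝ) => ((0 : (ι → ℝ)), w))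
        (ContinuousLinearMap.inr ℝ (ι → ℝ) (ι → Fin N → ℝ)) 0 :=
      (ContinuousLinearMap.inr ℝ (ι → ℝ) (ι → Fin N → ℝ)).hasFDerivAt
    have h1 : HasFDerivAt e.symm (A.symm : ((ι → ℝ) × (ι → Fin N → ℝ)) →L[ℝ] (ι → ℝ) × (ι → Fin N → ℝ)) (0, 0) :=
      hinvS.hasFDerivAt
    have h2 : HasFDerivAt (fun q : (ι → ℝ) × (ι → Fin N → ℝ) => q.1)
        (ContinuousLinearMap.fst ℝ (ι → ℝ) (ι → Fin N → ℝ)) (e.symm (0, 0)) :=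
      (ContinuousLinearMap.fst ℝ (ι → ℝ) (ι → Fin N → ℝ)).hasFDerivAt
    have htot : HasFDerivAt t
        ((ContinuousLinearMap.fst ℝ (ι → ℝ) (ι → Fin N → ℝ)).comp
          ((A.symm : ((ι → ℝ) × (ι → Fin N → ℝ)) →L[ℝ] (ι → ℝ) × (ι → Fin N → ℝ)).comp (ContinuousLinearMap.inr ℝ (ι → ℝ) (ι → Fin N → ℝ)))) 0 := by
      have := (h2.comp (0, 0) h1).comp 0 h0
      exact this
    rw [htot.fderiv]
    show ((A.symm : ((ι → ℝ) × (ι → Fin N → ℝ)) →L[ℝ] (ι → ℝ) × (ι → Fin N → ℝ)) (0, w)).1 = (Δ sh)⁻¹ *ᵥ Fv vh w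
    have hAsymm : (A.symm : ((ι → ℝ) × (ι → Fin N → ℝ)) →L[ℝ] (ι → ℝ) × (ι → Fin N → ℝ)) (0, w) = Zinv (0, w) := rfl
    rw [hAsymm, hZinvapp]
    show (Δ sh)⁻¹ *ᵥ ((2 : ℝ)⁻¹ • (0 : (ι → ℝ)) + Wmap c M vh w) = (Δ sh)⁻¹ *ᵥ Fv vh w
    rw [smul_zero, zero_add, hWFv]
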